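/- Assume G is rooted with root i*, let ℓ ≥ 0 be an integer, and assume p ∈ (0, 1/2]. Then P({ ω ∈ Ω : ω_{ℓ+1} ω_{ℓ+2} ⋯ ω_{ℓ+L*} = ζ(i*) }) ≥ ( p (1−p)^{dep(G)−1} )^{N ℓ*}. -/

import Mathlib

open scoped BigOperators Classical ENNReal

namespace PCO

/-- Edge sets of digraphs on the vertex set `Fin N`. -/
abbrev Edges (N : ℕ) := Finset (Fin N × Fin N)

/-- A digraph is simple if it has no self-loops. -/
def Simple (N : ℕ) (E : Edges N) : Prop := ∀ e ∈ E, e.1 ≠ e.2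

/-- The set of out-edges of vertex `i` in the digraph with edge set `E`. -/
def outEdges (N : ℕ) (E : Edges N) (i : Fin N) : Edges N := E.filter (fun e => e.1 = i)

/-- `E'` is (the edge set of) a feasible subgraph of `E`: it is a subgraph on the same
vertex set containing, for each vertex `i`, all out-edges of `i` or none of them. -/
def Feasible (N : ℕ) (E E' : Edges N) : Prop :=
  E' ⊆ E ∧ ∀ i : Fin N, outEdges N E i ⊆ E' ∨ Disjoint (outEdges N E i) E'

/-- The binary phase update rule `R_j`, with threshold `rj`, applied to the state `s`. -/
def Rset (rj s : ℝ) : Set ℝ :=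
  if s < rj then {0} else if s = rj then ({0, 1} : Set ℝ) else {1}

/-- A solution of the PCO network over the sequence `ξ` of (feasible) subgraphs of `E`
(`ξ k` is the graph used at the `k`-th jump, `k ≥ 1`): an unbounded nondecreasing sequence
of jump times `tJ` with `tJ 0 = 0`, together with the states `st k = τ(tJ k, k)` just after
each jump; the state at a hybrid time `(t,k)` is recovered by the flow, see `Sol.val`. -/
structure Sol (N : ℕ) (T : ℝ) (r : Fin N → ℝ) (E : Edges N) (ξ : ℕ → Edges N) where
  tJ : ℕ → ℝ
  st : ℕ → Fin N → ℝ
  tJ0 : tJ 0 = 0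
  mono : Monotone tJ
  unbdd : ∀ M : ℝ, ∃ k, M < tJ k
  box : ∀ k i, st k i ∈ Set.Icc (0:ℝ) 1
  box' : ∀ k i, st k i + (tJ (k+1) - tJ k) / T ∈ Set.Icc (0:ℝ) 1
  jump : ∀ k, ∃ i : Fin N,
      st k i + (tJ (k+1) - tJ k) / T = 1 ∧
      st (k+1) i = 0 ∧
      ∀ j, j ≠ i →
        ((i, j) ∈ ξ (k+1) → st (k+1) j ∈ Rset (r j) (st k j + (tJ (k+1) - tJ k) / T)) ∧
        ((i, j) ∉ ξ (k+1) → st (k+1) j = st k j)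

variable {N : ℕ} {T : ℝ} {r : Fin N → ℝ} {E : Edges N} {ξ : ℕ → Edges N}

/-- The state `τ_i(t,k)` of agent `i` at the hybrid time `(t,k)`. -/
noncomputable def Sol.val (sol : Sol N T r E ξ) (t : ℝ) (k : ℕ) (i : Fin N) : ℝ :=
  sol.st k i + (t - sol.tJ k) / T

/-- `(t,k)` is a hybrid time of the solution. -/
def Sol.HT (sol : Sol N T r E ξ) (t : ℝ) (k : ℕ) : Prop :=
  sol.tJ k ≤ t ∧ t ≤ sol.tJ (k+1)

/-- The synchronization set `A_s = {μ·1_N : μ ∈ [0,1]} ∪ {0,1}^N`. -/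
def SyncSet (N : ℕ) : Set (Fin N → ℝ) :=
  {x | ∃ μ ∈ Set.Icc (0:ℝ) 1, x = fun _ => μ} ∪ {x | ∀ i, x i = 0 ∨ x i = 1}

/-- There is a directed path (walk) of length `n` from `i` to `j` in `E`. -/
def reachIn (N : ℕ) (E : Edges N) : ℕ → Fin N → Fin N → Prop
  | 0, i, j => i = j
  | n+1, i, j => ∃ m : Fin N, (i, m) ∈ E ∧ reachIn N E n m j

/-- `i` is a root: every vertex is reachable from `i`. -/
def IsRoot (N : ℕ) (E : Edges N) (i : Fin N) : Prop := ∀ j : Fin N, ∃ n, reachIn N E n i j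

/-- The depth of `j` with respect to `i`: the length of a shortest directed path from `i` to `j`. -/
noncomputable def depth (N : ℕ) (E : Edges N) (i j : Fin N) : ℕ :=
  sInf {n | reachIn N E n i j}

/-- `q*`, the maximum depth of a vertex with respect to the root `istar`. -/
noncomputable def maxDepth (N : ℕ) (E : Edges N) (istar : Fin N) : ℕ :=
  Finset.univ.sup (fun j => depth N E istar j)

/-- `dep(G)`: the maximum of `q*` over all roots. -/
noncomputable def depG (N : ℕ) (E : Edges N) : ℕ :=
  Finset.univ.sup (fun i => if IsRoot N E i then maxDepth N E i else 0)

/-- `G_q(i*)`: the feasible subgraph of `E` whose edges are the out-edges of the vertices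
at depth `q` with respect to `istar`. -/
noncomputable def Gq (N : ℕ) (E : Edges N) (istar : Fin N) (q : ℕ) : Edges N :=
  E.filter (fun e => depth N E istar e.1 = q)

/-- `r̲ = min_i r_i`. -/
noncomputable def rmin (N : ℕ) (r : Fin N → ℝ) : ℝ := ⨅ i, r i

/-- `ℓ* = N(⌊1/r̲⌋ + 1)`. -/
noncomputable def ellStar (N : ℕ) (r : Fin N → ℝ) : ℕ :=
  N * (Nat.floor (1 / rmin N r) + 1)

/-- `L* = ℓ* q*`: the length of the synchronization string. -/
noncomputable def Lstar (N : ℕ) (r : Fin N → ℝ) (E : Edges N) (istar : Fin N) : ℕ :=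
  ellStar N r * maxDepth N E istar

/-- The sequence `ξ` contains the synchronization string `ζ(i*)` as the consecutive block
`φ_{k₀} ⋯ φ_{k₀+L*−1}`: i.e. `φ_{k₀+qℓ*+m} = G_q(i*)` for `0 ≤ q ≤ q*−1`, `0 ≤ m ≤ ℓ*−1`. -/
noncomputable def HasZetaAt (N : ℕ) (r : Fin N → ℝ) (E : Edges N) (istar : Fin N)
    (ξ : ℕ → Edges N) (k₀ : ℕ) : Prop :=
  ∀ q < maxDepth N E istar, ∀ m < ellStar N r,
    ξ (k₀ + q * ellStar N r + m) = Gq N E istar q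

/-- Partial synchronization set `A_q(i*)`: all agents of depth `≤ q` with respect to `i*`
have a common state in `[0,1]`, or all have states in `{0,1}`; the remaining agents have
states in `[0,1]`. -/
noncomputable def Aq (N : ℕ) (E : Edges N) (istar : Fin N) (q : ℕ) : Set (Fin N → ℝ) :=
  {x | (∀ i, x i ∈ Set.Icc (0:ℝ) 1) ∧
    ((∃ μ ∈ Set.Icc (0:ℝ) 1, ∀ i, depth N E istar i ≤ q → x i = μ) ∨
      (∀ i, depth N E istar i ≤ q → x i = 0 ∨ x i = 1))}

/-- The Lyapunov-like function `V`: one minus the largest circular gap between the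
(sorted) entries of `τ`, when the endpoints of `[0,1]` are identified. -/
noncomputable def Vfun (N : ℕ) (hN : 0 < N) (τ : Fin N → ℝ) : ℝ :=
  1 - Finset.univ.sup' (Finset.univ_nonempty_iff.mpr ⟨⟨0, hN⟩⟩)
      (fun i : Fin N =>
        if h : (i : ℕ) + 1 < N then
          (τ ∘ Tuple.sort τ) ⟨(i : ℕ) + 1, h⟩ - (τ ∘ Tuple.sort τ) i
        else 1 - (τ ∘ Tuple.sort τ) i + (τ ∘ Tuple.sort τ) ⟨0, hN⟩)

/-- `i` has at least one out-neighbor in `E`. -/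
def HasOut (N : ℕ) (E : Edges N) (i : Fin N) : Prop := ∃ j : Fin N, (i, j) ∈ E

/-- The set `V*` of vertices of `E` having at least one out-neighbor. -/
abbrev Vstar (N : ℕ) (E : Edges N) := {i : Fin N // HasOut N E i}

/-- The feasible subgraph corresponding to `v : V* → {0,1}`: its edge set is the union of
the out-edge sets of those `i ∈ V*` with `v i = 1`. -/
noncomputable def graphOf (N : ℕ) (E : Edges N) (v : Vstar N E → Bool) : Edges N :=
  E.filter (fun e => (if h : HasOut N E e.1 then v ⟨e.1, h⟩ else false) = true)

/-- The sample space `Ω = ({0,1}^{V*})^{ℕ}`; `ω k` represents `ω_{k+1}`. -/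
abbrev Omega (N : ℕ) (E : Edges N) := ℕ → (Vstar N E → Bool)

open MeasureTheory in
/-- The Bernoulli(`p`) measure on `{0,1}`. -/
noncomputable def bern (p : ℝ) (hp : p ≤ 1) : Measure Bool :=
  (PMF.bernoulli (Real.toNNReal p) (Real.toNNReal_le_one.mpr hp)).toMeasure

open MeasureTheory in
/-- The measure `μ_p` on `{0,1}^{V*}` making coordinates i.i.d. Bernoulli(`p`). -/
noncomputable def muP (N : ℕ) (E : Edges N) (p : ℝ) (hp : p ≤ 1) :
    Measure (Vstar N E → Bool) :=
  Measure.pi (fun _ => bern p hp)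

open MeasureTheory in
/-- `P` is the countable product of copies of `μ_p` on `Ω`: the probability of every
cylinder event is the corresponding product. -/
def IsProductMeasure (N : ℕ) (E : Edges N) (p : ℝ) (hp : p ≤ 1)
    (P : Measure (Omega N E)) : Prop :=
  ∀ (S : Finset ℕ) (f : ℕ → Set (Vstar N E → Bool)),
    P {ω | ∀ k ∈ S, ω k ∈ f k} = ∏ k ∈ S, muP N E p hp (f k)

/-- The sample path `ω` contains the synchronization string `ζ(i*)` at positions
`ω_{ℓ+1} ⋯ ω_{ℓ+L*}`. -/
noncomputable def HasZetaAtOmega (N : ℕ) (r : Fin N → ℝ) (E : Edges N) (istar : Fin N)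
    (ω : Omega N E) (ℓ : ℕ) : Prop :=
  ∀ q < maxDepth N E istar, ∀ m < ellStar N r,
    graphOf N E (ω (ℓ + q * ellStar N r + m)) = Gq N E istar q

/-- The sequence of feasible subgraphs `ξ = ω` determined by the sample path `ω`
(`seqOf ω k = φ_k` for `k ≥ 1`). -/
noncomputable def seqOf (N : ℕ) (E : Edges N) (ω : Omega N E) : ℕ → Edges N :=
  fun k => graphOf N E (ω (k - 1))

/-- The sync-time `T*` of a solution: the infimum of the (continuous) times `t ≥ 0` at
which the state lies in the synchronization set (`∞` if there is no such time). -/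
noncomputable def Sol.syncTime (sol : Sol N T r E ξ) : ℝ≥0∞ :=
  sInf {x : ℝ≥0∞ | ∃ t : ℝ, ∃ k : ℕ, 0 ≤ t ∧ sol.HT t k ∧
    (fun i => sol.val t k i) ∈ SyncSet N ∧ x = ENNReal.ofReal t}

/-- Euclidean distance from a point of `ℝ^N` to a set. -/
noncomputable def eucDist (N : ℕ) (x : Fin N → ℝ) (S : Set (Fin N → ℝ)) : ℝ :=
  Metric.infDist ((WithLp.equiv 2 (Fin N → ℝ)).symm x)
    ((WithLp.equiv 2 (Fin N → ℝ)).symm '' S)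

lemma graphOf_eq_Gq_iff (N : ℕ) (E : Edges N) (istar : Fin N) (q : ℕ)
    (v : Vstar N E → Bool) :
    graphOf N E v = Gq N E istar q ↔
      ∀ i : Vstar N E, v i = decide (depth N E istar i.1 = q) := by
  constructor
  · intro h i
    obtain ⟨j, hij⟩ := i.2
    have h1 : ((i.1, j) ∈ graphOf N E v) ↔ v i = true := by
      simp only [graphOf, Finset.mem_filter, hij, true_and]
      rw [dif_pos i.2]
    have h2 : ((i.1, j) ∈ Gq N E istar q) ↔ depth N E istar i.1 = q := by
      simp only [Gq, Finset.mem_filter, hij, true_and]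
    rw [h] at h1
    have hiff : v i = true ↔ depth N E istar i.1 = q := h1.symm.trans h2
    cases hv : v i
    · have : ¬ depth N E istar i.1 = q := by
        intro hd
        rw [hv] at hiff
        exact Bool.false_ne_true (hiff.mpr hd)
      simp [this]
    · simp [hiff.mp hv]
  · intro h
    ext e
    simp only [graphOf, Gq, Finset.mem_filter]
    constructor
    · rintro ⟨he, hv⟩
      refine ⟨he, ?_⟩
      have hout : HasOut N E e.1 := ⟨e.2, by rwa [Prod.mk.eta]⟩
      rw [dif_pos hout, h ⟨e.1, hout⟩] at hv
      exact of_decide_eq_true hv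
    · rintro ⟨he, hd⟩
      refine ⟨he, ?_⟩
      have hout : HasOut N E e.1 := ⟨e.2, by rwa [Prod.mk.eta]⟩
      rw [dif_pos hout, h ⟨e.1, hout⟩]
      exact decide_eq_true hd

instance bern_isProb (p : ℝ) (hp : p ≤ 1) :
    MeasureTheory.IsProbabilityMeasure (bern p hp) := by
  unfold bern; infer_instance

lemma muP_singleton (N : ℕ) (E : Edges N) (p : ℝ) (hp0 : 0 ≤ p) (hp : p ≤ 1)
    (v0 : Vstar N E → Bool) :
    muP N E p hp {v0} = ∏ i : Vstar N E,
      (if v0 i then ENNReal.ofReal p else ENNReal.ofReal (1 - p)) := by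
  have hs : ({v0} : Set (Vstar N E → Bool)) = Set.pi Set.univ (fun i => {v0 i}) := by
    ext w; simp [Set.mem_pi, funext_iff]
  rw [hs, muP, MeasureTheory.Measure.pi_pi]
  refine Finset.prod_congr rfl fun i _ => ?_
  rw [bern, PMF.toMeasure_apply_singleton _ _ (measurableSet_singleton _)]
  cases hv : v0 i
  · simp only [PMF.bernoulli_apply, Bool.cond_false, Bool.false_eq_true, if_false]
    rw [ENNReal.ofReal_sub _ hp0, ENNReal.ofReal_one]
    rw [ENNReal.coe_sub, ENNReal.coe_one]; rfl
  · simp [PMF.bernoulli_apply]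
    rfl
lemma pow_ineq_real (p : ℝ) (hp0 : 0 < p) (hp : p ≤ 1/2) (A B Ns N dep qs : ℕ)
    (hA : A ≤ Ns) (hNs : Ns ≤ N) (hAB : A + B = qs * Ns) (hqs : 1 ≤ qs) (hqd : qs ≤ dep) :
    (p * (1 - p) ^ (dep - 1)) ^ N ≤ p ^ A * (1 - p) ^ B := by
  have h1 : (0:ℝ) ≤ p := hp0.le
  have h2 : (0:ℝ) ≤ 1 - p := by linarith
  have h3 : p ≤ 1 - p := by linarith
  have h4 : 1 - p ≤ 1 := by linarith
  have hAN : A ≤ N := hA.trans hNs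
  obtain ⟨d, rfl⟩ : ∃ d, dep = d + 1 := ⟨dep - 1, by omega⟩
  have h5 : qs * Ns ≤ (d + 1) * N := Nat.mul_le_mul hqd hNs
  have hmul : (d + 1) * N = d * N + N := Nat.succ_mul d N
  simp only [Nat.add_sub_cancel]
  calc (p * (1 - p) ^ d) ^ N
      = p ^ N * (1 - p) ^ (d * N) := by rw [mul_pow, ← pow_mul]
    _ = p ^ A * (p ^ (N - A) * (1 - p) ^ (d * N)) := by
        rw [← mul_assoc, ← pow_add]
        congr 2
        omega
    _ ≤ p ^ A * ((1 - p) ^ (N - A) * (1 - p) ^ (d * N)) := by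
        refine mul_le_mul_of_nonneg_left ?_ (pow_nonneg h1 A)
        exact mul_le_mul_of_nonneg_right (pow_le_pow_left₀ h1 h3 _) (pow_nonneg h2 _)
    _ = p ^ A * (1 - p) ^ (N - A + d * N) := by rw [← pow_add]
    _ ≤ p ^ A * (1 - p) ^ B := by
        refine mul_le_mul_of_nonneg_left ?_ (pow_nonneg h1 A)
        exact pow_le_pow_of_le_one h2 h4 (by omega)
theorem stmt12
    (N : ℕ) (hN : 0 < N) (T : ℝ) (hT : 0 < T) (r : Fin N → ℝ)
    (hr : ∀ i, r i ∈ Set.Ioo (0:ℝ) 1) (E : Edges N) (hE : Simple N E)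
    (istar : Fin N) (hroot : IsRoot N E istar) (ℓ : ℕ)
    (p : ℝ) (hp0 : 0 < p) (hp : p ≤ 1/2)
    (P : MeasureTheory.Measure (Omega N E)) [MeasureTheory.IsProbabilityMeasure P]
    (hP : IsProductMeasure N E p (by linarith) P) :
    ENNReal.ofReal (p * (1 - p) ^ (depG N E - 1)) ^ (N * ellStar N r) ≤
      P {ω : Omega N E | HasZetaAtOmega N r E istar ω ℓ} := by
  have hp1 : p ≤ 1 := by linarith
  have hp0' : (0:ℝ) ≤ p := hp0.le
  have h2 : (0:ℝ) ≤ 1 - p := by linarith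
  have hc0 : (0:ℝ) ≤ p * (1 - p) ^ (depG N E - 1) :=
    mul_nonneg hp0' (pow_nonneg h2 _)
  have hc1 : p * (1 - p) ^ (depG N E - 1) ≤ 1 := by
    have := pow_le_one₀ h2 (by linarith : (1:ℝ) - p ≤ 1) (n := depG N E - 1)
    nlinarith
  by_cases hq0 : maxDepth N E istar = 0
  · have hev : {ω : Omega N E | HasZetaAtOmega N r E istar ω ℓ} = Set.univ := by
      ext ω
      simp [HasZetaAtOmega, hq0]
    rw [hev, MeasureTheory.measure_univ]
    exact pow_le_one' (ENNReal.ofReal_le_one.mpr hc1) _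
  · set qs := maxDepth N E istar with hqs
    set ls := ellStar N r with hls
    have hlspos : 0 < ls := Nat.mul_pos hN (Nat.succ_pos _)
    have hq1 : 1 ≤ qs := Nat.one_le_iff_ne_zero.mpr hq0
    set f : ℕ → Set (Vstar N E → Bool) :=
      fun k => {v | graphOf N E v = Gq N E istar ((k - ℓ) / ls)} with hf
    set S : Finset ℕ := (Finset.range qs ×ˢ Finset.range ls).image
      (fun qm => ℓ + qm.1 * ls + qm.2) with hS
    have key : ∀ q m, m < ls → ((ℓ + q * ls + m) - ℓ) / ls = q := by
      intro q m hm
      have h' : (ℓ + q * ls + m) - ℓ = ls * q + m := by rw [mul_comm]; omega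
      rw [h', Nat.mul_add_div hlspos, Nat.div_eq_of_lt hm, add_zero]
    have hev : {ω : Omega N E | HasZetaAtOmega N r E istar ω ℓ}
        = {ω | ∀ k ∈ S, ω k ∈ f k} := by
      ext ω
      simp only [Set.mem_setOf_eq, HasZetaAtOmega, hS, Finset.mem_image,
        Finset.mem_product, Finset.mem_range]
      constructor
      · rintro h k ⟨⟨q, m⟩, ⟨hq, hm⟩, rfl⟩
        simp only [hf, Set.mem_setOf_eq, key q m hm]
        exact h q hq m hm
      · intro h q hq m hm
        have := h (ℓ + q * ls + m) ⟨(q, m), ⟨hq, hm⟩, rfl⟩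
        simpa only [hf, Set.mem_setOf_eq, key q m hm] using this
    rw [hev, hP S f]
    have hinj : ∀ x ∈ Finset.range qs ×ˢ Finset.range ls,
        ∀ y ∈ Finset.range qs ×ˢ Finset.range ls,
        (fun qm : ℕ × ℕ => ℓ + qm.1 * ls + qm.2) x
          = (fun qm : ℕ × ℕ => ℓ + qm.1 * ls + qm.2) y → x = y := by
      rintro ⟨q1, m1⟩ hx ⟨q2, m2⟩ hy heq
      simp only [Finset.mem_product, Finset.mem_range] at hx hy
      simp only at heq
      have e1 := key q1 m1 hx.2
      have e2 := key q2 m2 hy.2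
      rw [heq, e2] at e1
      subst e1
      have hm : m1 = m2 := by
        have := Nat.add_left_cancel heq
        exact this
      rw [hm]
    rw [hS, Finset.prod_image hinj]
    have hmu : ∀ q < qs, ∀ m < ls, muP N E p hp1 (f (ℓ + q * ls + m)) =
        ∏ i : Vstar N E,
          (if depth N E istar i.1 = q then ENNReal.ofReal p
            else ENNReal.ofReal (1 - p)) := by
      intro q hq m hm
      have hset : f (ℓ + q * ls + m)
          = ({fun i : Vstar N E => decide (depth N E istar i.1 = q)} :
              Set (Vstar N E → Bool)) := by
        ext v
        simp only [hf, Set.mem_setOf_eq, key q m hm, Set.mem_singleton_iff,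
          graphOf_eq_Gq_iff, funext_iff]
      rw [hset, muP_singleton N E p hp0' hp1]
      refine Finset.prod_congr rfl fun i _ => ?_
      by_cases hd : depth N E istar i.1 = q <;> simp [hd]
    calc ENNReal.ofReal (p * (1 - p) ^ (depG N E - 1)) ^ (N * ls)
        = (ENNReal.ofReal (p * (1 - p) ^ (depG N E - 1)) ^ N) ^ ls := by
          rw [← pow_mul]
      _ ≤ (∏ q ∈ Finset.range qs, ∏ i : Vstar N E,
            (if depth N E istar i.1 = q then ENNReal.ofReal p
              else ENNReal.ofReal (1 - p))) ^ ls := by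
          refine pow_le_pow_left' ?_ ls
          have hqd : qs ≤ depG N E := by
            have hle := Finset.le_sup (f := fun i : Fin N =>
              if IsRoot N E i then maxDepth N E i else 0) (Finset.mem_univ istar)
            simpa only [depG, if_pos hroot] using hle
          have hNs : Fintype.card (Vstar N E) ≤ N := by
            have h := Fintype.card_subtype_le (fun i : Fin N => HasOut N E i)
            simpa using h
          have hinner : ∀ q : ℕ, (∏ i : Vstar N E,
              (if depth N E istar i.1 = q then ENNReal.ofReal p
                else ENNReal.ofReal (1 - p)))
              = ENNReal.ofReal
                (p ^ (Finset.univ.filter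
                    (fun i : Vstar N E => depth N E istar i.1 = q)).card
                  * (1 - p) ^ (Finset.univ.filter
                    (fun i : Vstar N E => ¬ depth N E istar i.1 = q)).card) := by
            intro q
            rw [Finset.prod_ite, Finset.prod_const, Finset.prod_const,
              ← ENNReal.ofReal_pow hp0', ← ENNReal.ofReal_pow h2,
              ← ENNReal.ofReal_mul (pow_nonneg hp0' _)]
          have hA : (∑ q ∈ Finset.range qs, (Finset.univ.filter
              (fun i : Vstar N E => depth N E istar i.1 = q)).card)
              ≤ Fintype.card (Vstar N E) := by
            have haq : ∀ q : ℕ, (Finset.univ.filter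
                (fun i : Vstar N E => depth N E istar i.1 = q)).card
                = ∑ i : Vstar N E, (if depth N E istar i.1 = q then 1 else 0) :=
              fun q => Finset.card_filter _ _
            calc ∑ q ∈ Finset.range qs, (Finset.univ.filter
                  (fun i : Vstar N E => depth N E istar i.1 = q)).card
                = ∑ i : Vstar N E, ∑ q ∈ Finset.range qs,
                    (if depth N E istar i.1 = q then 1 else 0) := by
                  simp_rw [haq]; exact Finset.sum_comm
              _ ≤ ∑ _i : Vstar N E, 1 := Finset.sum_le_sum fun i _ => by
                  rw [Finset.sum_ite_eq]; split <;> simp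
              _ = Fintype.card (Vstar N E) := by
                  simp
          have hAB : (∑ q ∈ Finset.range qs, (Finset.univ.filter
                (fun i : Vstar N E => depth N E istar i.1 = q)).card)
              + (∑ q ∈ Finset.range qs, (Finset.univ.filter
                (fun i : Vstar N E => ¬ depth N E istar i.1 = q)).card)
              = qs * Fintype.card (Vstar N E) := by
            rw [← Finset.sum_add_distrib]
            have : ∀ q ∈ Finset.range qs, (Finset.univ.filter
                  (fun i : Vstar N E => depth N E istar i.1 = q)).card
                + (Finset.univ.filter
                  (fun i : Vstar N E => ¬ depth N E istar i.1 = q)).card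
                = Fintype.card (Vstar N E) := by
              intro q _
              rw [Finset.card_filter_add_card_filter_not]
              simp
            rw [Finset.sum_congr rfl this, Finset.sum_const, Finset.card_range,
              smul_eq_mul]
          calc ENNReal.ofReal (p * (1 - p) ^ (depG N E - 1)) ^ N
              = ENNReal.ofReal ((p * (1 - p) ^ (depG N E - 1)) ^ N) :=
                (ENNReal.ofReal_pow hc0 N).symm
            _ ≤ ENNReal.ofReal
                (p ^ (∑ q ∈ Finset.range qs, (Finset.univ.filter
                    (fun i : Vstar N E => depth N E istar i.1 = q)).card)
                  * (1 - p) ^ (∑ q ∈ Finset.range qs, (Finset.univ.filter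
                    (fun i : Vstar N E => ¬ depth N E istar i.1 = q)).card)) := by
                exact ENNReal.ofReal_le_ofReal
                  (pow_ineq_real p hp0 hp _ _ _ N (depG N E) qs hA hNs hAB hq1 hqd)
            _ = ENNReal.ofReal (∏ q ∈ Finset.range qs,
                (p ^ (Finset.univ.filter
                    (fun i : Vstar N E => depth N E istar i.1 = q)).card
                  * (1 - p) ^ (Finset.univ.filter
                    (fun i : Vstar N E => ¬ depth N E istar i.1 = q)).card)) := by
                rw [Finset.prod_mul_distrib, Finset.prod_pow_eq_pow_sum,
                  Finset.prod_pow_eq_pow_sum]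
            _ = ∏ q ∈ Finset.range qs, ENNReal.ofReal
                (p ^ (Finset.univ.filter
                    (fun i : Vstar N E => depth N E istar i.1 = q)).card
                  * (1 - p) ^ (Finset.univ.filter
                    (fun i : Vstar N E => ¬ depth N E istar i.1 = q)).card) := by
                rw [ENNReal.ofReal_prod_of_nonneg]
                intro q _
                positivity
            _ = ∏ q ∈ Finset.range qs, ∏ i : Vstar N E,
                (if depth N E istar i.1 = q then ENNReal.ofReal p
                  else ENNReal.ofReal (1 - p)) :=
                Finset.prod_congr rfl fun q _ => (hinner q).symm
      _ = ∏ q ∈ Finset.range qs, (∏ i : Vstar N E,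
            (if depth N E istar i.1 = q then ENNReal.ofReal p
              else ENNReal.ofReal (1 - p))) ^ ls := by
          rw [Finset.prod_pow]
      _ = ∏ q ∈ Finset.range qs, ∏ m ∈ Finset.range ls,
            muP N E p hp1 (f (ℓ + q * ls + m)) := by
          refine Finset.prod_congr rfl fun q hq => ?_
          have hc : ∀ m ∈ Finset.range ls, muP N E p hp1 (f (ℓ + q * ls + m))
              = ∏ i : Vstar N E,
                (if depth N E istar i.1 = q then ENNReal.ofReal p
                  else ENNReal.ofReal (1 - p)) := fun m hm =>
            hmu q (Finset.mem_range.mp hq) m (Finset.mem_range.mp hm)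
          rw [Finset.prod_congr rfl hc, Finset.prod_const, Finset.card_range]
      _ = ∏ x ∈ Finset.range qs ×ˢ Finset.range ls,
            muP N E p hp1 (f (ℓ + x.1 * ls + x.2)) := by
          rw [Finset.prod_product]
end PCO
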